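/- Let 0 < α ≤ 1, let u_0(x, t) = x², and define u_1(x, t) = J^α_t [ u_0(x, ·/2) · (∂²u_0/∂x²)(x, ·/2) − u_0(x, ·) ](t) and u_2(x, t) = J^α_t [ u_0(x, ·/2)·(∂²u_1/∂x²)(x, ·/2) + u_1(x, ·/2)·(∂²u_0/∂x²)(x, ·/2) − u_1(x, ·) ](t), where J^α_t denotes the Riemann–Liouville integral in the time variable. Then for all x ∈ ℝ and t > 0, u_1(x, t) = x²·t^α/Γ(1 + α) and u_2(x, t) = x²·t^{2α}·(2^{2−α} − 1)/Γ(1 + 2α). -/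

import Mathlib

/-- Riemann–Liouville fractional integral of order `α` (applied in the time variable). -/
noncomputable def rlInt (α : ℝ) (f : ℝ → ℝ) (t : ℝ) : ℝ :=
  (1 / Real.Gamma α) * ∫ τ in (0:ℝ)..t, (t - τ) ^ (α - 1) * f τ

lemma beta_real {a b t : ℝ} (ha : 0 < a) (hb : 0 < b) (ht : 0 < t) :
    ∫ τ in (0:ℝ)..t, τ ^ (b - 1) * (t - τ) ^ (a - 1)
      = t ^ (a + b - 1) * (Real.Gamma a * Real.Gamma b / Real.Gamma (a + b)) := by
  have hB := Complex.betaIntegral_scaled (b : ℂ) (a : ℂ) ht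
  have hG := Complex.Gamma_mul_Gamma_eq_betaIntegral (s := (b : ℂ)) (t := (a : ℂ))
    (by simpa using hb) (by simpa using ha)
  have hGne : Complex.Gamma ((b : ℂ) + a) ≠ 0 :=
    Complex.Gamma_ne_zero_of_re_pos (by simp; positivity)
  have hBeta : Complex.betaIntegral (b : ℂ) (a : ℂ)
      = Complex.Gamma (b : ℂ) * Complex.Gamma (a : ℂ) / Complex.Gamma ((b : ℂ) + a) := by
    field_simp [hG]
    linear_combination -hG
  have heq : Set.EqOn (fun τ : ℝ => ((τ ^ (b - 1) * (t - τ) ^ (a - 1) : ℝ) : ℂ))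
      (fun τ : ℝ => (τ : ℂ) ^ ((b : ℂ) - 1) * ((t : ℂ) - τ) ^ ((a : ℂ) - 1))
      (Set.uIcc (0:ℝ) t) := by
    intro τ hτ
    rw [Set.uIcc_of_le ht.le] at hτ
    simp only [Complex.ofReal_mul]
    rw [Complex.ofReal_cpow hτ.1, Complex.ofReal_cpow (by linarith [hτ.2])]
    push_cast
    ring
  have h1 : ((∫ τ in (0:ℝ)..t, τ ^ (b - 1) * (t - τ) ^ (a - 1) : ℝ) : ℂ)
      = (t : ℂ) ^ ((b : ℂ) + a - 1) * Complex.betaIntegral (b : ℂ) (a : ℂ) := by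
    rw [← intervalIntegral.integral_ofReal, intervalIntegral.integral_congr heq, hB]
  rw [hBeta] at h1
  apply Complex.ofReal_injective
  rw [h1, show ((b:ℂ) + a - 1) = ((a + b - 1 : ℝ) : ℂ) by push_cast; ring,
    show ((b:ℂ) + a) = ((a + b : ℝ) : ℂ) by push_cast; ring,
    ← Complex.ofReal_cpow ht.le, Complex.Gamma_ofReal, Complex.Gamma_ofReal,
    Complex.Gamma_ofReal]
  push_cast
  ring

lemma rlInt_const_mul (α c : ℝ) (f : ℝ → ℝ) (t : ℝ) :
    rlInt α (fun τ => c * f τ) t = c * rlInt α f t := by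
  unfold rlInt
  have : (fun τ => (t - τ) ^ (α - 1) * (c * f τ)) = fun τ => c * ((t - τ) ^ (α - 1) * f τ) := by
    funext τ; ring
  rw [this, intervalIntegral.integral_const_mul]
  ring

lemma rlInt_congr {α : ℝ} {f g : ℝ → ℝ} {t : ℝ} (ht : 0 ≤ t)
    (h : ∀ τ ∈ Set.Icc (0:ℝ) t, f τ = g τ) : rlInt α f t = rlInt α g t := by
  unfold rlInt
  congr 1
  apply intervalIntegral.integral_congr
  intro τ hτ
  rw [Set.uIcc_of_le ht] at hτ
  dsimp only
  rw [h τ hτ]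

lemma rlInt_one {α : ℝ} (hα : 0 < α) {t : ℝ} (ht : 0 ≤ t) :
    rlInt α (fun _ => (1:ℝ)) t = t ^ α / Real.Gamma (1 + α) := by
  rcases eq_or_lt_of_le ht with rfl | ht'
  · simp [rlInt, Real.rpow_natCast, Real.zero_rpow hα.ne']
  · unfold rlInt
    have key := beta_real hα one_pos ht'
    have : (fun τ : ℝ => (t - τ) ^ (α - 1) * 1) = fun τ : ℝ => τ ^ ((1:ℝ) - 1) * (t - τ) ^ (α - 1) := by
      funext τ; simp
    rw [this, key]
    have hg : Real.Gamma α ≠ 0 := (Real.Gamma_pos_of_pos hα).ne'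
    rw [show α + 1 - 1 = α by ring, show α + 1 = 1 + α by ring, Real.Gamma_one]
    field_simp

lemma rlInt_rpow {α : ℝ} (hα : 0 < α) {t : ℝ} (ht : 0 < t) :
    rlInt α (fun τ => τ ^ α) t = t ^ (2 * α) * Real.Gamma (1 + α) / Real.Gamma (1 + 2 * α) := by
  unfold rlInt
  have key := beta_real hα (by linarith : (0:ℝ) < α + 1) ht
  have h1 : (fun τ : ℝ => (t - τ) ^ (α - 1) * τ ^ α)
      = fun τ : ℝ => τ ^ (α + 1 - 1) * (t - τ) ^ (α - 1) := by
    funext τ; rw [show α + 1 - 1 = α by ring]; ring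
  rw [h1, key]
  have hg : Real.Gamma α ≠ 0 := (Real.Gamma_pos_of_pos hα).ne'
  rw [show α + (α + 1) - 1 = 2 * α by ring, show α + (α + 1) = 1 + 2 * α by ring,
    show α + 1 = 1 + α by ring]
  field_simp

lemma iter2_sq_mul (c x : ℝ) : iteratedDeriv 2 (fun y : ℝ => y ^ 2 * c) x = 2 * c := by
  have h1 : deriv (fun y : ℝ => y ^ 2 * c) = fun y => 2 * y * c := by
    funext y
    rw [deriv_mul_const (by fun_prop)]
    simp [mul_comm]
  rw [show (2:ℕ) = 1 + 1 from rfl, iteratedDeriv_succ, iteratedDeriv_one, h1]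
  have h2 : (fun y : ℝ => 2 * y * c) = fun y => (2 * c) * y := by funext y; ring
  rw [h2, deriv_const_mul_field, deriv_id'', mul_one]

theorem hptm_iterates_ex2_fractional (α : ℝ) (hα₀ : 0 < α) (hα₁ : α ≤ 1)
    (u₀ u₁ u₂ : ℝ → ℝ → ℝ)
    (h₀ : ∀ x t : ℝ, u₀ x t = x ^ 2)
    (h₁ : ∀ x t : ℝ, u₁ x t =
      rlInt α (fun τ =>
        u₀ x (τ / 2) * iteratedDeriv 2 (fun y => u₀ y (τ / 2)) x - u₀ x τ) t)
    (h₂ : ∀ x t : ℝ, u₂ x t =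
      rlInt α (fun τ =>
        u₀ x (τ / 2) * iteratedDeriv 2 (fun y => u₁ y (τ / 2)) x
          + u₁ x (τ / 2) * iteratedDeriv 2 (fun y => u₀ y (τ / 2)) x
          - u₁ x τ) t) :
    ∀ x t : ℝ, 0 < t →
      u₁ x t = x ^ 2 * t ^ α / Real.Gamma (1 + α) ∧
      u₂ x t = x ^ 2 * t ^ (2 * α) * (2 ^ ((2:ℝ) - α) - 1) / Real.Gamma (1 + 2 * α) := by
  have hiter0 : ∀ s x : ℝ, iteratedDeriv 2 (fun y => u₀ y s) x = 2 := by
    intro s x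
    have : (fun y => u₀ y s) = fun y : ℝ => y ^ 2 * 1 := by funext y; simp [h₀]
    rw [this, iter2_sq_mul]; norm_num
  -- closed form for u₁
  have hu₁ : ∀ y s : ℝ, u₁ y s = y ^ 2 * rlInt α (fun _ => (1:ℝ)) s := by
    intro y s
    rw [h₁]
    have : (fun τ => u₀ y (τ / 2) * iteratedDeriv 2 (fun z => u₀ z (τ / 2)) y - u₀ y τ)
        = fun _ : ℝ => y ^ 2 * 1 := by
      funext τ; rw [h₀, h₀, hiter0]; ring
    rw [this, rlInt_const_mul]
  have hu₁' : ∀ y s : ℝ, 0 ≤ s → u₁ y s = y ^ 2 * s ^ α / Real.Gamma (1 + α) := by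
    intro y s hs
    rw [hu₁, rlInt_one hα₀ hs]; ring
  intro x t ht
  have hGα : Real.Gamma (1 + α) ≠ 0 := (Real.Gamma_pos_of_pos (by linarith)).ne'
  constructor
  · rw [hu₁' x t ht.le]
  · rw [h₂]
    set k : ℝ := x ^ 2 * (2 ^ ((2:ℝ) - α) - 1) / Real.Gamma (1 + α) with hk
    have hstep : rlInt α (fun τ =>
        u₀ x (τ / 2) * iteratedDeriv 2 (fun y => u₁ y (τ / 2)) x
          + u₁ x (τ / 2) * iteratedDeriv 2 (fun y => u₀ y (τ / 2)) x
          - u₁ x τ) t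
        = rlInt α (fun τ => k * τ ^ α) t := by
      apply rlInt_congr ht.le
      intro τ hτ
      have hτ0 : 0 ≤ τ := hτ.1
      have hτ2 : 0 ≤ τ / 2 := by linarith
      have hiter1 : iteratedDeriv 2 (fun y => u₁ y (τ / 2)) x
          = 2 * (rlInt α (fun _ => (1:ℝ)) (τ / 2)) := by
        have : (fun y => u₁ y (τ / 2)) = fun y : ℝ => y ^ 2 * rlInt α (fun _ => (1:ℝ)) (τ / 2) := by
          funext y; rw [hu₁]
        rw [this, iter2_sq_mul]
      rw [h₀, hiter0, hiter1, hu₁, hu₁' x τ hτ0, rlInt_one hα₀ hτ2]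
      have hhalf : (τ / 2) ^ α = τ ^ α * (2:ℝ) ^ (-α) := by
        rw [Real.div_rpow hτ0 (by norm_num : (0:ℝ) ≤ 2),
          Real.rpow_neg (by norm_num : (0:ℝ) ≤ 2), div_eq_mul_inv]
      have h2a : (4:ℝ) * (2:ℝ) ^ (-α) - 1 = 2 ^ ((2:ℝ) - α) - 1 := by
        rw [show (2:ℝ) - α = 2 + (-α) by ring, Real.rpow_add (by norm_num : (0:ℝ) < 2),
          Real.rpow_two]
        norm_num
      rw [hk, hhalf, ← h2a]
      field_simp
      ring
    rw [hstep, rlInt_const_mul, rlInt_rpow hα₀ ht]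
    have hG2 : Real.Gamma (1 + 2 * α) ≠ 0 := (Real.Gamma_pos_of_pos (by linarith)).ne'
    rw [hk]
    field_simp
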